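/- Under the standing assumptions and the STOS double-step relations, the following one-step inequality holds: F(y⁺) + G(z⁺) + H(y⁺) + ‖y⁺ − x⁺‖²/(2γ) − ‖z⁺ − x⁺‖²/(2γ) + ⟨g⁺, z⁺ − y⁺⟩ ≤ F(y) + G(z) + H(y) + ‖y − x‖²/(2γ) − ‖z − x‖²/(2γ) + ⟨g, z − y⟩ + ((3γ + 2)/(2γ))‖y⁺ − z‖² + ½‖g⁺ − ∇H(y⁺)‖² + ‖g − ∇H(y)‖² + ((γ(1 + l + 2β) − 1)/(2γ))‖y⁺ − y‖². -/

import Mathlib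

open scoped RealInnerProductSpace

section Aux

variable {n : ℕ}
local notation "E" => EuclideanSpace ℝ (Fin n)

/-- Norm-squared of a convex (affine) combination. -/
private lemma stos_comb_sq (p q r : E) (a b : ℝ) (hab : a + b = 1) :
    ‖(a • p + b • q) - r‖ ^ 2 = a * ‖p - r‖ ^ 2 + b * ‖q - r‖ ^ 2 - a * b * ‖p - q‖ ^ 2 := by
  have hb : b = 1 - a := by linarith
  subst hb
  simp only [← real_inner_self_eq_norm_sq, inner_sub_left, inner_sub_right,
    inner_add_left, inner_add_right, real_inner_smul_left, real_inner_smul_right]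
  ring_nf

/-- Strengthened prox-minimizer inequality using weak convexity of `F`. -/
private lemma stos_prox_strong (F : E → ℝ) (γ l : ℝ) (hγ : 0 < γ)
    (hFconv : ConvexOn ℝ Set.univ (fun u => F u + (l/2) * ‖u‖ ^ 2))
    (x m : E) (hm : ∀ u, F m + ‖m - x‖ ^ 2 / (2*γ) ≤ F u + ‖u - x‖ ^ 2 / (2*γ)) (v : E) :
    2*γ*F m + ‖m - x‖ ^ 2 ≤ 2*γ*F v + ‖v - x‖ ^ 2 + (γ*l - 1) * ‖m - v‖ ^ 2 := by
  have h2γ : (0:ℝ) < 2*γ := by linarith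
  have hm' : ∀ u, 2*γ*F m + ‖m - x‖ ^ 2 ≤ 2*γ*F u + ‖u - x‖ ^ 2 := by
    intro u
    have := mul_le_mul_of_nonneg_left (hm u) (le_of_lt h2γ)
    have e : ∀ X : ℝ, 2*γ*(X/(2*γ)) = X := fun X => by field_simp
    calc 2*γ*F m + ‖m - x‖ ^ 2 = 2*γ*(F m + ‖m - x‖^2/(2*γ)) := by rw [mul_add, e]
    _ ≤ 2*γ*(F u + ‖u - x‖^2/(2*γ)) := this
    _ = 2*γ*F u + ‖u - x‖ ^ 2 := by rw [mul_add, e]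
  have key : ∀ t ∈ Set.Ioo (0:ℝ) 1,
      2*γ*F m + ‖m - x‖ ^ 2 ≤ 2*γ*F v + ‖v - x‖ ^ 2 + (1 - t) * (γ*l - 1) * ‖m - v‖ ^ 2 := by
    intro t ht
    obtain ⟨ht0, ht1⟩ := ht
    have hmin := hm' ((1 - t) • m + t • v)
    have hconv := hFconv.2 (Set.mem_univ m) (Set.mem_univ v)
      (by linarith : (0:ℝ) ≤ 1 - t) (le_of_lt ht0) (by ring)
    simp only [smul_eq_mul] at hconv
    have hconv2 := mul_le_mul_of_nonneg_left hconv (le_of_lt h2γ)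
    have e1 : ‖((1 - t) • m + t • v) - x‖ ^ 2
        = (1-t) * ‖m - x‖ ^ 2 + t * ‖v - x‖ ^ 2 - (1-t)*t*‖m - v‖^2 :=
      stos_comb_sq m v x (1-t) t (by ring)
    have e2 : ‖(1 - t : ℝ) • m + t • v‖ ^ 2
        = (1-t) * ‖m‖ ^ 2 + t * ‖v‖ ^ 2 - (1-t)*t*‖m - v‖^2 := by
      have := stos_comb_sq m v 0 (1-t) t (by ring)
      simpa using this
    rw [e1] at hmin
    rw [e2] at hconv2
    have step : t * (2*γ*F m + ‖m - x‖ ^ 2)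
        ≤ t * (2*γ*F v + ‖v - x‖ ^ 2 + (1 - t) * (γ*l - 1) * ‖m - v‖ ^ 2) := by
      nlinarith [hmin, hconv2]
    exact le_of_mul_le_mul_left step ht0
  have hlim : Filter.Tendsto
      (fun t : ℝ => 2*γ*F v + ‖v - x‖ ^ 2 + (1 - t) * (γ*l - 1) * ‖m - v‖ ^ 2)
      (nhdsWithin 0 (Set.Ioi 0))
      (nhds (2*γ*F v + ‖v - x‖ ^ 2 + (γ*l - 1) * ‖m - v‖ ^ 2)) := by
    have hc : Continuous (fun t : ℝ =>
        2*γ*F v + ‖v - x‖ ^ 2 + (1 - t) * (γ*l - 1) * ‖m - v‖ ^ 2) := by continuity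
    have := hc.tendsto 0
    simp only [sub_zero, one_mul] at this
    exact this.mono_left nhdsWithin_le_nhds
  refine ge_of_tendsto hlim ?_
  filter_upwards [Ioo_mem_nhdsGT zero_lt_one] with t ht
  exact key t ht

/-- Descent lemma for a function with `β`-Lipschitz gradient. -/
private lemma stos_descent (H : E → ℝ) (H' : E → E) (β : ℝ)
    (hHdiff : ∀ u, HasGradientAt H (H' u) u)
    (hHlip : ∀ u v, ‖H' u - H' v‖ ≤ β * ‖u - v‖) (a b : E) :
    H b ≤ H a + ⟪H' a, b - a⟫ + β / 2 * ‖b - a‖ ^ 2 := by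
  set d := b - a with hd
  have hline : ∀ t : ℝ, HasDerivAt (fun t : ℝ => H (a + t • d)) ⟪H' (a + t • d), d⟫ t := by
    intro t
    have hc : HasDerivAt (fun t : ℝ => a + t • d) d t := by
      simpa using ((hasDerivAt_id t).smul_const d).const_add a
    have := ((hHdiff (a + t • d)).hasFDerivAt).comp_hasDerivAt t hc
    simpa [InnerProductSpace.toDual_apply_apply, Function.comp_def] using this
  set δ : ℝ → ℝ := fun t => H a + t * ⟪H' a, d⟫ + β / 2 * ‖d‖ ^ 2 * t ^ 2 - H (a + t • d) with hδ
  have hδd : ∀ t : ℝ, HasDerivAt δ (⟪H' a, d⟫ + β * t * ‖d‖ ^ 2 - ⟪H' (a + t • d), d⟫) t := by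
    intro t
    have h1 : HasDerivAt (fun t : ℝ => H a + t * ⟪H' a, d⟫ + β / 2 * ‖d‖ ^ 2 * t ^ 2)
        (⟪H' a, d⟫ + β * t * ‖d‖ ^ 2) t := by
      have := (((hasDerivAt_id t).mul_const (⟪H' a, d⟫ : ℝ)).const_add (H a)).add
        ((((hasDerivAt_id t).pow 2).const_mul (β / 2 * ‖d‖ ^ 2)))
      convert this using 2 <;> first | rfl | (simp <;> ring)
    exact h1.sub (hline t)
  have hmono : MonotoneOn δ (Set.Icc (0:ℝ) 1) := by
    apply monotoneOn_of_deriv_nonneg (convex_Icc 0 1)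
    · exact fun t _ => ((hδd t).differentiableAt).continuousAt.continuousWithinAt
    · exact fun t _ => ((hδd t).differentiableAt).differentiableWithinAt
    · intro t ht
      rw [interior_Icc] at ht
      rw [(hδd t).deriv]
      have h1 : ⟪H' (a + t • d) - H' a, d⟫ ≤ ‖H' (a + t • d) - H' a‖ * ‖d‖ :=
        real_inner_le_norm _ _
      have h2 : ‖H' (a + t • d) - H' a‖ ≤ β * ‖t • d‖ := by
        have := hHlip (a + t • d) a
        simpa using this
      have h3 : ‖t • d‖ = |t| * ‖d‖ := by rw [norm_smul]; simp
      have h4 : |t| = t := abs_of_pos ht.1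
      have h5 : ⟪H' (a + t • d) - H' a, d⟫ = ⟪H' (a + t • d), d⟫ - ⟪H' a, d⟫ := by
        rw [inner_sub_left]
      rw [h3, h4] at h2
      nlinarith [mul_le_mul_of_nonneg_right h2 (norm_nonneg d)]
  have h01 := hmono (Set.mem_Icc.2 ⟨le_refl 0, zero_le_one⟩)
    (Set.mem_Icc.2 ⟨zero_le_one, le_refl 1⟩) zero_le_one
  have e0 : δ 0 = 0 := by simp [hδ]
  have e1 : δ 1 = H a + ⟪H' a, d⟫ + β / 2 * ‖d‖ ^ 2 - H b := by
    simp [hδ, hd]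
  rw [e0, e1] at h01
  linarith

/-- The key algebraic identity for the STOS double step. -/
private lemma stos_Eid (γ : ℝ) (x yp z zp gp : E) :
    -‖yp - x‖^2 + ‖z - ((2:ℝ) • yp - γ • gp - x)‖^2 - ‖zp - ((2:ℝ) • yp - γ • gp - x)‖^2
      + ‖yp - (x + zp - yp)‖^2 - ‖zp - (x + zp - yp)‖^2 + 2*γ*⟪gp, zp - yp⟫
    = -‖z - x‖^2 + 2*‖z - yp‖^2 + 2*γ*⟪gp, z - yp⟫ := by
  simp only [← real_inner_self_eq_norm_sq, inner_sub_left, inner_sub_right,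
    inner_add_left, inner_add_right, real_inner_smul_left, real_inner_smul_right]
  linear_combination (-γ) * real_inner_comm z gp + (-γ) * real_inner_comm gp zp

/-- The Cauchy–Schwarz / Young estimate collecting the estimator error terms. -/
private lemma stos_star (β : ℝ) (hβ : 0 < β) (hβ1 : β ≤ 1) (Hy Hyp g gp y yp z : E)
    (hlip : ‖Hyp - Hy‖ ≤ β * ‖yp - y‖) :
    ⟪gp, z - yp⟫ - ⟪g, z - y⟫ + ⟪Hy, yp - y⟫
      ≤ 3/2 * ‖z - yp‖^2 + 1/2 * ‖gp - Hyp‖^2 + ‖g - Hy‖^2 + (1+β)/2 * ‖yp - y‖^2 := by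
  have hid : ⟪gp, z - yp⟫ - ⟪g, z - y⟫ + ⟪Hy, yp - y⟫
      = ⟪gp - Hyp, z - yp⟫ + ⟪Hyp - Hy, z - yp⟫ - ⟪g - Hy, z - y⟫ := by
    simp only [inner_sub_left, inner_sub_right]
    ring
  have c1 : ⟪gp - Hyp, z - yp⟫ ≤ ‖gp - Hyp‖ * ‖z - yp‖ := real_inner_le_norm _ _
  have c2 : ⟪Hyp - Hy, z - yp⟫ ≤ ‖Hyp - Hy‖ * ‖z - yp‖ := real_inner_le_norm _ _
  have c3 : -⟪g - Hy, z - y⟫ ≤ ‖g - Hy‖ * ‖z - y‖ := by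
    rw [← inner_neg_left, neg_sub, norm_sub_rev g Hy]
    exact real_inner_le_norm _ _
  have tri : ‖z - y‖ ≤ ‖z - yp‖ + ‖yp - y‖ := norm_sub_le_norm_sub_add_norm_sub z yp y
  have h1 : ⟪gp - Hyp, z - yp⟫ ≤ (‖gp - Hyp‖^2 + ‖z - yp‖^2)/2 := by
    nlinarith [sq_nonneg (‖gp - Hyp‖ - ‖z - yp‖)]
  have h2 : ⟪Hyp - Hy, z - yp⟫ ≤ β/2 * ‖yp - y‖^2 + 1/2 * ‖z - yp‖^2 := by
    nlinarith [mul_le_mul_of_nonneg_right hlip (norm_nonneg (z - yp)),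
      mul_nonneg hβ.le (sq_nonneg (‖yp - y‖ - ‖z - yp‖)),
      mul_nonneg (sub_nonneg.2 hβ1) (sq_nonneg ‖z - yp‖)]
  have h3 : -⟪g - Hy, z - y⟫ ≤ ‖g - Hy‖^2 + 1/2 * ‖z - yp‖^2 + 1/2 * ‖yp - y‖^2 := by
    nlinarith [mul_le_mul_of_nonneg_left tri (norm_nonneg (g - Hy)),
      sq_nonneg (2*‖g - Hy‖ - (‖z - yp‖ + ‖yp - y‖)), sq_nonneg (‖z - yp‖ - ‖yp - y‖)]
  linarith [hid, h1, h2, h3]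

end Aux

/-- Lemma A.3 of the paper, stated pathwise with explicit estimator vectors `g, g⁺`:
one-step inequality for the STOS double step. -/
theorem stmt_4 {n : ℕ}
    (F G H : EuclideanSpace ℝ (Fin n) → ℝ)
    (F' H' : EuclideanSpace ℝ (Fin n) → EuclideanSpace ℝ (Fin n))
    (γ L l β : ℝ) (hγ : 0 < γ) (hL : 0 < L) (hβ : 0 < β) (hβ1 : β ≤ 1)
    (hFdiff : ∀ u, HasGradientAt F (F' u) u)
    (hFlip : ∀ u v, ‖F' u - F' v‖ ≤ L * ‖u - v‖)
    (hFconv : ConvexOn ℝ Set.univ (fun u => F u + (l/2) * ‖u‖ ^ 2))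
    (hG : LowerSemicontinuous G)
    (hHdiff : ∀ u, HasGradientAt H (H' u) u)
    (hHlip : ∀ u v, ‖H' u - H' v‖ ≤ β * ‖u - v‖)
    (w x xp y yp z zp g gp : EuclideanSpace ℝ (Fin n))
    (hy : ∀ u, F y + ‖y - w‖ ^ 2 / (2*γ) ≤ F u + ‖u - w‖ ^ 2 / (2*γ))
    (hz : ∀ u, G z + ‖z - ((2:ℝ) • y - γ • g - w)‖ ^ 2 / (2*γ)
        ≤ G u + ‖u - ((2:ℝ) • y - γ • g - w)‖ ^ 2 / (2*γ))
    (hx : x = w + z - y)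
    (hyp : ∀ u, F yp + ‖yp - x‖ ^ 2 / (2*γ) ≤ F u + ‖u - x‖ ^ 2 / (2*γ))
    (hzp : ∀ u, G zp + ‖zp - ((2:ℝ) • yp - γ • gp - x)‖ ^ 2 / (2*γ)
        ≤ G u + ‖u - ((2:ℝ) • yp - γ • gp - x)‖ ^ 2 / (2*γ))
    (hxp : xp = x + zp - yp) :
    F yp + G zp + H yp + ‖yp - xp‖ ^ 2 / (2*γ) - ‖zp - xp‖ ^ 2 / (2*γ) + ⟪gp, zp - yp⟫
      ≤ F y + G z + H y + ‖y - x‖ ^ 2 / (2*γ) - ‖z - x‖ ^ 2 / (2*γ) + ⟪g, z - y⟫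
        + ((3*γ + 2)/(2*γ)) * ‖yp - z‖ ^ 2
        + (1/2) * ‖gp - H' yp‖ ^ 2 + ‖g - H' y‖ ^ 2
        + ((γ * (1 + l + 2*β) - 1)/(2*γ)) * ‖yp - y‖ ^ 2 := by
  subst hxp
  have h2γ : (0:ℝ) < 2*γ := by linarith
  have hγ' : (2*γ) ≠ 0 := ne_of_gt h2γ
  -- F step, with weak-convexity strengthening
  have L1 := stos_prox_strong F γ l hγ hFconv x yp hyp y
  -- G step
  have L2 : 2*γ*G zp + ‖zp - ((2:ℝ) • yp - γ • gp - x)‖ ^ 2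
      ≤ 2*γ*G z + ‖z - ((2:ℝ) • yp - γ • gp - x)‖ ^ 2 := by
    have := mul_le_mul_of_nonneg_left (hzp z) (le_of_lt h2γ)
    have e : ∀ X : ℝ, 2*γ*(X/(2*γ)) = X := fun X => by field_simp
    calc 2*γ*G zp + ‖zp - ((2:ℝ) • yp - γ • gp - x)‖ ^ 2
        = 2*γ*(G zp + ‖zp - ((2:ℝ) • yp - γ • gp - x)‖^2/(2*γ)) := by rw [mul_add, e]
    _ ≤ 2*γ*(G z + ‖z - ((2:ℝ) • yp - γ • gp - x)‖^2/(2*γ)) := this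
    _ = 2*γ*G z + ‖z - ((2:ℝ) • yp - γ • gp - x)‖ ^ 2 := by rw [mul_add, e]
  -- H step (descent lemma), scaled
  have L3 := stos_descent H H' β hHdiff hHlip y yp
  have L3' := mul_le_mul_of_nonneg_left L3 (le_of_lt h2γ)
  -- error-term estimate, scaled
  have L4 := stos_star β hβ hβ1 (H' y) (H' yp) g gp y yp z (hHlip yp y)
  have L4' := mul_le_mul_of_nonneg_left L4 (le_of_lt h2γ)
  -- algebraic identity
  have Eq1 := stos_Eid γ x yp z zp gp
  -- reverse-norm identity
  have hrev : ‖yp - z‖ ^ 2 = ‖z - yp‖ ^ 2 := by rw [norm_sub_rev]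
  -- pass to the inequality multiplied through by 2γ
  have key : 2*γ*F yp + 2*γ*G zp + 2*γ*H yp + ‖yp - (x + zp - yp)‖ ^ 2
        - ‖zp - (x + zp - yp)‖ ^ 2 + 2*γ*⟪gp, zp - yp⟫
      ≤ 2*γ*F y + 2*γ*G z + 2*γ*H y + ‖y - x‖ ^ 2 - ‖z - x‖ ^ 2 + 2*γ*⟪g, z - y⟫
        + (3*γ + 2) * ‖yp - z‖ ^ 2
        + γ * ‖gp - H' yp‖ ^ 2 + 2*γ*‖g - H' y‖ ^ 2
        + (γ * (1 + l + 2*β) - 1) * ‖yp - y‖ ^ 2 := by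
    rw [hrev]
    linarith [L1, L2, L3', L4', Eq1]
  -- deduce the stated inequality by dividing by 2γ
  have eL : F yp + G zp + H yp + ‖yp - (x + zp - yp)‖ ^ 2 / (2*γ)
        - ‖zp - (x + zp - yp)‖ ^ 2 / (2*γ) + ⟪gp, zp - yp⟫
      = (2*γ*F yp + 2*γ*G zp + 2*γ*H yp + ‖yp - (x + zp - yp)‖ ^ 2
        - ‖zp - (x + zp - yp)‖ ^ 2 + 2*γ*⟪gp, zp - yp⟫) / (2*γ) := by
    field_simp
  have eR : F y + G z + H y + ‖y - x‖ ^ 2 / (2*γ) - ‖z - x‖ ^ 2 / (2*γ) + ⟪g, z - y⟫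
        + ((3*γ + 2)/(2*γ)) * ‖yp - z‖ ^ 2
        + (1/2) * ‖gp - H' yp‖ ^ 2 + ‖g - H' y‖ ^ 2
        + ((γ * (1 + l + 2*β) - 1)/(2*γ)) * ‖yp - y‖ ^ 2
      = (2*γ*F y + 2*γ*G z + 2*γ*H y + ‖y - x‖ ^ 2 - ‖z - x‖ ^ 2 + 2*γ*⟪g, z - y⟫
        + (3*γ + 2) * ‖yp - z‖ ^ 2
        + γ * ‖gp - H' yp‖ ^ 2 + 2*γ*‖g - H' y‖ ^ 2
        + (γ * (1 + l + 2*β) - 1) * ‖yp - y‖ ^ 2) / (2*γ) := by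
    field_simp
  rw [eL, eR]
  exact (div_le_div_iff_of_pos_right h2γ).mpr key
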